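/- Let 𝕋 = ℝ/ℤ with quotient map p : ℝ → 𝕋 and Haar probability measure λ, let f : 𝕋 → ℝ be the unique function with f(x) ∈ (−1/2, 1/2] and p(f(x)) = x, and for t ∈ ℝ let α_t : 𝕋² → 𝕋² be α_t(x,y) = (x + p(t·f(y−x)), y + p(t·f(y−x))). Define β : 𝕋² → 𝕋² by β(x,y) = (x, 2x − y). Then: (i) β preserves the product measure λ ⊗ λ; (ii) β ∘ β = id; (iii) β fixes the first coordinate; (iv) for every t ∈ ℝ and every (x,y) ∈ 𝕋² with y − x ≠ p(1/2), one has β(α_t(x,y)) = α_{−t}(β(x,y)); in particular this identity holds (λ⊗λ)-almost everywhere. -/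

import Mathlib

open MeasureTheory

noncomputable section

private lemma punctured_nhds_neBot_addCircle :
    (nhdsWithin (0 : AddCircle (1 : ℝ)) {(0 : AddCircle (1 : ℝ))}ᶜ).NeBot := by
  rw [← mem_closure_iff_nhdsWithin_neBot]
  have ht : Filter.Tendsto (fun n : ℕ => (((1 : ℝ) / (n + 2) : ℝ) : AddCircle (1 : ℝ)))
      Filter.atTop (nhds 0) := by
    have h0 : Filter.Tendsto (fun n : ℕ => (1 : ℝ) / (n + 2)) Filter.atTop (nhds 0) := by
      exact Filter.Tendsto.div_atTop (tendsto_const_nhds (x := (1 : ℝ)))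
        (Filter.tendsto_atTop_add_const_right _ 2 tendsto_natCast_atTop_atTop)
    have := ((AddCircle.continuous_mk' (1 : ℝ)).tendsto 0).comp h0
    simpa [Function.comp_def] using this
  refine mem_closure_of_tendsto ht (Filter.Eventually.of_forall fun n => ?_)
  simp only [Set.mem_compl_iff, Set.mem_singleton_iff]
  rw [AddCircle.coe_eq_zero_iff]
  rintro ⟨m, hm⟩
  have h1 : (0 : ℝ) < 1 / (n + 2) := by positivity
  have h2 : (1 : ℝ) / (n + 2) < 1 := by
    rw [div_lt_one (by positivity)]; linarith [Nat.cast_nonneg (α := ℝ) n]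
  have hmr : (m : ℝ) = 1 / (n + 2) := by simpa using hm
  rcases lt_trichotomy m 0 with h | h | h
  · have : (m : ℝ) < 0 := by exact_mod_cast h
    linarith
  · subst h; simp at hmr; linarith
  · have : (1 : ℝ) ≤ m := by exact_mod_cast h
    linarith

private lemma addCircle_singleton_null (c : AddCircle (1 : ℝ)) :
    (volume : Measure (AddCircle (1 : ℝ))) {c} = 0 := by
  haveI := punctured_nhds_neBot_addCircle
  exact measure_singleton c

/-- **The strong malleability involution on the two-torus.**
With `f` and the flow `(α_t)` as in the malleability of Bernoulli actions, the involution
`β(x,y) = (x, 2x − y)` preserves `λ ⊗ λ`, has period `2`, fixes the first coordinate, and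
anti-commutes with the flow: `β ∘ α_t = α_{−t} ∘ β` away from the set `{y − x = 1/2}`, in
particular almost everywhere. -/
theorem strong_malleability_involution_torus
    (f : AddCircle (1 : ℝ) → ℝ)
    (hf : ∀ x : AddCircle (1 : ℝ),
      f x ∈ Set.Ioc (-(1 / 2) : ℝ) (1 / 2) ∧ ((f x : ℝ) : AddCircle (1 : ℝ)) = x)
    (α : ℝ → AddCircle (1 : ℝ) × AddCircle (1 : ℝ) →
      AddCircle (1 : ℝ) × AddCircle (1 : ℝ))
    (hα : ∀ (t : ℝ) (x y : AddCircle (1 : ℝ)),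
      α t (x, y) = (x + ((t * f (y - x) : ℝ) : AddCircle (1 : ℝ)),
                    y + ((t * f (y - x) : ℝ) : AddCircle (1 : ℝ))))
    (β : AddCircle (1 : ℝ) × AddCircle (1 : ℝ) →
      AddCircle (1 : ℝ) × AddCircle (1 : ℝ))
    (hβ : ∀ x y : AddCircle (1 : ℝ), β (x, y) = (x, x + x - y)) :
    (MeasurePreserving β
      ((volume : Measure (AddCircle (1 : ℝ))).prod volume)
      ((volume : Measure (AddCircle (1 : ℝ))).prod volume)) ∧
    (β ∘ β = id) ∧
    (∀ p : AddCircle (1 : ℝ) × AddCircle (1 : ℝ), (β p).1 = p.1) ∧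
    (∀ (t : ℝ) (x y : AddCircle (1 : ℝ)),
      y - x ≠ (((1 / 2 : ℝ)) : AddCircle (1 : ℝ)) →
      β (α t (x, y)) = α (-t) (β (x, y))) ∧
    (∀ t : ℝ, ∀ᵐ p ∂((volume : Measure (AddCircle (1 : ℝ))).prod volume),
      β (α t p) = α (-t) (β p)) := by
  -- oddness of f away from the point 1/2
  have hhalf : -(((1 / 2 : ℝ) : AddCircle (1 : ℝ))) = ((1 / 2 : ℝ) : AddCircle (1 : ℝ)) := by
    have h : ((1 / 2 : ℝ) : AddCircle (1 : ℝ)) + ((1 / 2 : ℝ) : AddCircle (1 : ℝ)) = 0 := by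
      rw [← AddCircle.coe_add]
      norm_num [AddCircle.coe_period]
    exact neg_eq_of_add_eq_zero_left h
  have key : ∀ z : AddCircle (1 : ℝ), z ≠ ((1 / 2 : ℝ) : AddCircle (1 : ℝ)) →
      f (-z) = -f z := by
    intro z hz
    obtain ⟨⟨hz1, hz2⟩, hz3⟩ := hf z
    obtain ⟨⟨hn1, hn2⟩, hn3⟩ := hf (-z)
    have hlt : f z < 1 / 2 :=
      lt_of_le_of_ne hz2 fun h => hz (by rw [← hz3, h])
    have hnz : (-z) ≠ ((1 / 2 : ℝ) : AddCircle (1 : ℝ)) := by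
      intro h
      apply hz
      have hzz : z = -(((1 / 2 : ℝ) : AddCircle (1 : ℝ))) := by rw [← h, neg_neg]
      rw [hzz, hhalf]
    have hltn : f (-z) < 1 / 2 :=
      lt_of_le_of_ne hn2 fun h => hnz (by rw [← hn3, h])
    have hmem1 : f (-z) ∈ Set.Ico (-(1 / 2) : ℝ) (-(1 / 2) + 1) :=
      ⟨le_of_lt hn1, by linarith⟩
    have hmem2 : -f z ∈ Set.Ico (-(1 / 2) : ℝ) (-(1 / 2) + 1) :=
      ⟨by linarith, by linarith⟩
    refine (AddCircle.coe_eq_coe_iff_of_mem_Ico hmem1 hmem2).mp ?_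
    rw [hn3]
    have hcoe : ((-f z : ℝ) : AddCircle (1 : ℝ)) = -(((f z : ℝ) : AddCircle (1 : ℝ))) := rfl
    rw [hcoe, hz3]
  -- part (iv)
  have part4 : ∀ (t : ℝ) (x y : AddCircle (1 : ℝ)),
      y - x ≠ ((1 / 2 : ℝ) : AddCircle (1 : ℝ)) →
      β (α t (x, y)) = α (-t) (β (x, y)) := by
    intro t x y hxy
    rw [hα, hβ, hβ, hα]
    have harg : x + x - y - x = -(y - x) := by abel
    rw [harg, key (y - x) hxy]
    have hco : ((-t * -f (y - x) : ℝ) : AddCircle (1 : ℝ))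
        = ((t * f (y - x) : ℝ) : AddCircle (1 : ℝ)) := by
      congr 1
      ring
    rw [hco]
    refine Prod.ext rfl ?_
    dsimp only
    abel
  refine ⟨?_, ?_, ?_, part4, ?_⟩
  · -- measure preserving
    have hβe : β = fun p : AddCircle (1 : ℝ) × AddCircle (1 : ℝ) =>
        (p.1, p.1 + p.1 - p.2) := funext fun p => hβ p.1 p.2
    rw [hβe]
    exact (MeasurePreserving.id volume).skew_product (g := fun x y => x + x - y)
      ((measurable_fst.add measurable_fst).sub measurable_snd)
      (Filter.Eventually.of_forall fun x =>
        (Measure.measurePreserving_sub_left volume (x + x)).map_eq)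
  · -- involution
    funext p
    obtain ⟨x, y⟩ := p
    simp only [Function.comp_apply, hβ, id]
    refine Prod.ext rfl ?_
    show x + x - (x + x - y) = y
    abel
  · intro p
    rw [show p = (p.1, p.2) from rfl, hβ]
  · -- a.e. identity
    intro t
    have hmeas : MeasurableSet
        {q : AddCircle (1 : ℝ) × AddCircle (1 : ℝ) |
          q.2 - q.1 = ((1 / 2 : ℝ) : AddCircle (1 : ℝ))} :=
      (measurable_snd.sub measurable_fst) (measurableSet_singleton _)
    have hN : ((volume : Measure (AddCircle (1 : ℝ))).prod volume)
        {q : AddCircle (1 : ℝ) × AddCircle (1 : ℝ) |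
          q.2 - q.1 = ((1 / 2 : ℝ) : AddCircle (1 : ℝ))} = 0 := by
      rw [Measure.prod_apply hmeas]
      have hfib : ∀ x : AddCircle (1 : ℝ),
          {y : AddCircle (1 : ℝ) | y - x = ((1 / 2 : ℝ) : AddCircle (1 : ℝ))}
            = {((1 / 2 : ℝ) : AddCircle (1 : ℝ)) + x} := by
        intro x
        ext y
        simp [sub_eq_iff_eq_add]
      have hzero : ∀ x : AddCircle (1 : ℝ),
          (volume : Measure (AddCircle (1 : ℝ)))
            (Prod.mk x ⁻¹' {q : AddCircle (1 : ℝ) × AddCircle (1 : ℝ) |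
              q.2 - q.1 = ((1 / 2 : ℝ) : AddCircle (1 : ℝ))}) = 0 := by
        intro x
        have : Prod.mk x ⁻¹' {q : AddCircle (1 : ℝ) × AddCircle (1 : ℝ) |
            q.2 - q.1 = ((1 / 2 : ℝ) : AddCircle (1 : ℝ))}
            = {((1 / 2 : ℝ) : AddCircle (1 : ℝ)) + x} := by
          rw [← hfib x]; rfl
        rw [this]
        exact addCircle_singleton_null _
      simp only [hzero]
      simp
    have hae : ∀ᵐ q ∂((volume : Measure (AddCircle (1 : ℝ))).prod volume),
        q.2 - q.1 ≠ ((1 / 2 : ℝ) : AddCircle (1 : ℝ)) := by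
      rw [ae_iff]
      simpa using hN
    filter_upwards [hae] with q hq
    exact part4 t q.1 q.2 hq
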